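/- For the sandwiched Rényi relative entropy D_α(ρ‖σ) = (1/(α−1)) log(Tr[(σ^{(1−α)/(2α)} ρ σ^{(1−α)/(2α)})^α]/Tr ρ) with α ∈ (1,2) and positive definite σ, one has D_α(ρ‖σ) ≥ 0 whenever ρ is a density matrix and σ is a density matrix, with equality if ρ = σ. -/

import Mathlib

open Matrix ComplexOrder

variable {d : Type*} [Fintype d] [DecidableEq d]

/-- Real power of a Hermitian matrix, via its spectral decomposition. -/
noncomputable def herPow {A : Matrix d d ℂ} (hA : A.IsHermitian) (r : ℝ) : Matrix d d ℂ :=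
  (hA.eigenvectorUnitary : Matrix d d ℂ) *
    Matrix.diagonal (fun i => ((hA.eigenvalues i ^ r : ℝ) : ℂ)) *
    star (hA.eigenvectorUnitary : Matrix d d ℂ)

lemma herPow_isHermitian {A : Matrix d d ℂ} (hA : A.IsHermitian) (r : ℝ) :
    (herPow hA r).IsHermitian := by
  unfold herPow
  rw [Matrix.star_eq_conjTranspose]
  exact Matrix.isHermitian_mul_mul_conjTranspose _
    (Matrix.isHermitian_diagonal_iff.mpr fun i => by
      simp [_root_.IsSelfAdjoint, Complex.conj_ofReal])

lemma sandwich_isHermitian {σ ρ : Matrix d d ℂ} (hσ : σ.IsHermitian) (hρ : ρ.IsHermitian)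
    (r : ℝ) : (herPow hσ r * ρ * herPow hσ r).IsHermitian := by
  have hT := herPow_isHermitian hσ r
  unfold Matrix.IsHermitian at *
  rw [Matrix.conjTranspose_mul, Matrix.conjTranspose_mul, hT, hρ, Matrix.mul_assoc]

/-- `Ψ_α(ρ,σ) = Tr[(σ^{(1−α)/(2α)} ρ σ^{(1−α)/(2α)})^α]`, computed as the sum of the
`α`-th powers of the eigenvalues of the Hermitian matrix `σ^{(1−α)/(2α)} ρ σ^{(1−α)/(2α)}`. -/
noncomputable def Psi (α : ℝ) (ρ σ : Matrix d d ℂ) (hρ : ρ.IsHermitian)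
    (hσ : σ.IsHermitian) : ℝ :=
  ∑ i, (sandwich_isHermitian hσ hρ ((1 - α) / (2 * α))).eigenvalues i ^ α

/-- Sandwiched Rényi relative entropy
`D_α(ρ‖σ) = (1/(α−1)) log₂(Ψ_α(ρ,σ)/Tr ρ)`. -/
noncomputable def renyiDiv (α : ℝ) (ρ σ : Matrix d d ℂ) (hρ : ρ.IsHermitian)
    (hσ : σ.IsHermitian) : ℝ :=
  (α - 1)⁻¹ * Real.logb 2 (Psi α ρ σ hρ hσ / ρ.trace.re)

/-! ### Auxiliary lemmas -/

lemma colSum_normSq (P : Matrix d d ℂ) (hP : star P * P = 1) (i : d) :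
    ∑ j, Complex.normSq (P j i) = 1 := by
  have h := congrFun (congrFun hP i) i
  rw [Matrix.mul_apply, Matrix.one_apply_eq] at h
  have h2 : (((∑ j, Complex.normSq (P j i) : ℝ)) : ℂ) = 1 := by
    push_cast
    rw [← h]
    refine Finset.sum_congr rfl fun j _ => ?_
    rw [Matrix.star_apply, RCLike.star_def, mul_comm, Complex.mul_conj]
  exact_mod_cast h2

lemma rowSum_normSq (P : Matrix d d ℂ) (hP : P * star P = 1) (j : d) :
    ∑ i, Complex.normSq (P j i) = 1 := by
  have h := congrFun (congrFun hP j) j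
  rw [Matrix.mul_apply, Matrix.one_apply_eq] at h
  have h2 : (((∑ i, Complex.normSq (P j i) : ℝ)) : ℂ) = 1 := by
    push_cast
    rw [← h]
    refine Finset.sum_congr rfl fun i _ => ?_
    rw [Matrix.star_apply, RCLike.star_def, Complex.mul_conj]
  exact_mod_cast h2

lemma diagEntry (u V : Matrix d d ℂ) (t : d → ℝ) (i : d) :
    ((star V * (u * Matrix.diagonal (fun j => ((t j : ℝ) : ℂ)) * star u) * V) i i).re
      = ∑ j, t j * Complex.normSq ((star u * V) j i) := by
  have hM : star V * (u * Matrix.diagonal (fun j => ((t j : ℝ) : ℂ)) * star u) * V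
      = star (star u * V) * (Matrix.diagonal (fun j => ((t j : ℝ) : ℂ)) * (star u * V)) := by
    simp [Matrix.star_mul, Matrix.mul_assoc]
  rw [hM, Matrix.mul_apply, Complex.re_sum]
  refine Finset.sum_congr rfl fun j _ => ?_
  rw [Matrix.star_apply, Matrix.diagonal_mul, RCLike.star_def]
  set z := (star u * V) j i
  have : (starRingEnd ℂ) z * ((t j : ℂ) * z) = ((t j * Complex.normSq z : ℝ) : ℂ) := by
    push_cast
    rw [← Complex.mul_conj]
    ring
  rw [this, Complex.ofReal_re]

lemma herPow_add {σ : Matrix d d ℂ} (hσ : σ.PosDef) (x y : ℝ) :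
    herPow hσ.1 x * herPow hσ.1 y = herPow hσ.1 (x + y) := by
  unfold herPow
  have h1 : star (hσ.1.eigenvectorUnitary : Matrix d d ℂ) *
      (hσ.1.eigenvectorUnitary : Matrix d d ℂ) = 1 :=
    (Matrix.mem_unitaryGroup_iff').mp hσ.1.eigenvectorUnitary.2
  calc (hσ.1.eigenvectorUnitary : Matrix d d ℂ) *
      Matrix.diagonal (fun i => ((hσ.1.eigenvalues i ^ x : ℝ) : ℂ)) *
      star (hσ.1.eigenvectorUnitary : Matrix d d ℂ) *
      ((hσ.1.eigenvectorUnitary : Matrix d d ℂ) *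
        Matrix.diagonal (fun i => ((hσ.1.eigenvalues i ^ y : ℝ) : ℂ)) *
        star (hσ.1.eigenvectorUnitary : Matrix d d ℂ))
      = (hσ.1.eigenvectorUnitary : Matrix d d ℂ) *
        (Matrix.diagonal (fun i => ((hσ.1.eigenvalues i ^ x : ℝ) : ℂ)) *
          Matrix.diagonal (fun i => ((hσ.1.eigenvalues i ^ y : ℝ) : ℂ))) *
        star (hσ.1.eigenvectorUnitary : Matrix d d ℂ) := by
        simp only [Matrix.mul_assoc]
        rw [← Matrix.mul_assoc (star _) _ _, h1, Matrix.one_mul]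
    _ = _ := by
        rw [Matrix.diagonal_mul_diagonal]
        have : (fun i => ((hσ.1.eigenvalues i ^ x : ℝ) : ℂ) * ((hσ.1.eigenvalues i ^ y : ℝ) : ℂ))
            = fun i => ((hσ.1.eigenvalues i ^ (x + y) : ℝ) : ℂ) := by
          funext i
          rw [← Complex.ofReal_mul, ← Real.rpow_add (hσ.eigenvalues_pos i)]
        rw [this]

lemma herPow_zero {A : Matrix d d ℂ} (hA : A.IsHermitian) : herPow hA 0 = 1 := by
  unfold herPow
  simp only [Real.rpow_zero, Complex.ofReal_one, Matrix.diagonal_one, Matrix.mul_one]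
  exact (Matrix.mem_unitaryGroup_iff).mp hA.eigenvectorUnitary.2

lemma herPow_one {A : Matrix d d ℂ} (hA : A.IsHermitian) : herPow hA 1 = A := by
  unfold herPow
  simp only [Real.rpow_one]
  exact hA.spectral_theorem.symm

lemma sandwich_posSemidef {ρ σ : Matrix d d ℂ} (hρ : ρ.PosSemidef) (hσ : σ.PosDef) (r : ℝ) :
    (herPow hσ.1 r * ρ * herPow hσ.1 r).PosSemidef := by
  have h := hρ.mul_mul_conjTranspose_same (herPow hσ.1 r)
  rwa [(herPow_isHermitian hσ.1 r).eq] at h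

lemma trace_diagonal_mul (c : d → ℂ) (M : Matrix d d ℂ) :
    (Matrix.diagonal c * M).trace = ∑ i, c i * M i i := by
  simp [Matrix.trace, Matrix.diag, Matrix.diagonal_mul]

lemma sum_eigenvalues_posDef {σ : Matrix d d ℂ} (hσ : σ.PosDef) (hσ1 : σ.trace = 1) :
    ∑ j, hσ.1.eigenvalues j = 1 := by
  have hW2 : star (hσ.1.eigenvectorUnitary : Matrix d d ℂ) *
      (hσ.1.eigenvectorUnitary : Matrix d d ℂ) = 1 :=
    (Matrix.mem_unitaryGroup_iff').mp hσ.1.eigenvectorUnitary.2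
  have hspec := hσ.1.spectral_theorem
  have htr : σ.trace = ∑ j, (hσ.1.eigenvalues j : ℂ) := by
    conv_lhs => rw [hspec]
    rw [Unitary.conjStarAlgAut_apply]
    rw [Matrix.mul_assoc, Matrix.trace_mul_comm, Matrix.mul_assoc, hW2, Matrix.mul_one,
      Matrix.trace_diagonal]
    rfl
  rw [hσ1] at htr
  exact_mod_cast htr.symm

set_option maxHeartbeats 2000000 in
theorem one_le_sum_pow (α : ℝ) (hα : α ∈ Set.Ioo (1 : ℝ) 2)
    (ρ σ : Matrix d d ℂ) (hρ : ρ.PosSemidef) (hσ : σ.PosDef)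
    (hρ1 : ρ.trace = 1) (hσ1 : σ.trace = 1) (r : ℝ) (hr : r = (1 - α) / (2 * α))
    (hA : (herPow hσ.1 r * ρ * herPow hσ.1 r).IsHermitian) :
    1 ≤ ∑ i, hA.eigenvalues i ^ α := by
  have hα1 : 1 < α := hα.1
  have hα0 : (0:ℝ) < α := zero_lt_one.trans hα1
  have hαne : α ≠ 0 := hα0.ne'
  have hα1ne : α - 1 ≠ 0 := sub_ne_zero.mpr hα1.ne'
  set e : ℝ := (α - 1) / α with he
  set q : ℝ := α / (α - 1) with hq
  have hq1 : 1 < q := by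
    rw [hq, lt_div_iff₀ (by linarith)]
    linarith
  set A : Matrix d d ℂ := herPow hσ.1 r * ρ * herPow hσ.1 r with hAdef
  have hApsd : A.PosSemidef := sandwich_posSemidef hρ hσ r
  set a : d → ℝ := hA.eigenvalues with ha
  have hann : ∀ i, 0 ≤ a i := fun i => hApsd.eigenvalues_nonneg i
  set s : d → ℝ := hσ.1.eigenvalues with hs
  have hsp : ∀ j, 0 < s j := fun j => hσ.eigenvalues_pos j
  set Wm : Matrix d d ℂ := (hσ.1.eigenvectorUnitary : Matrix d d ℂ) with hWm
  set Vm : Matrix d d ℂ := (hA.eigenvectorUnitary : Matrix d d ℂ) with hVm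
  have hW1 : Wm * star Wm = 1 := (Matrix.mem_unitaryGroup_iff).mp hσ.1.eigenvectorUnitary.2
  have hW2 : star Wm * Wm = 1 := (Matrix.mem_unitaryGroup_iff').mp hσ.1.eigenvectorUnitary.2
  have hV1 : Vm * star Vm = 1 := (Matrix.mem_unitaryGroup_iff).mp hA.eigenvectorUnitary.2
  have hV2 : star Vm * Vm = 1 := (Matrix.mem_unitaryGroup_iff').mp hA.eigenvectorUnitary.2
  set P : Matrix d d ℂ := star Wm * Vm with hP
  have hPc : star P * P = 1 := by
    rw [hP, Matrix.star_mul, star_star, Matrix.mul_assoc, ← Matrix.mul_assoc Wm (star Wm) Vm,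
      hW1, Matrix.one_mul, hV2]
  have hPr : P * star P = 1 := by
    rw [hP, Matrix.star_mul, star_star, Matrix.mul_assoc, ← Matrix.mul_assoc Vm (star Vm) Wm,
      hV1, Matrix.one_mul, hW2]
  set w : d → d → ℝ := fun j i => Complex.normSq (P j i) with hw
  have hwnn : ∀ j i, 0 ≤ w j i := fun j i => Complex.normSq_nonneg _
  have hcol : ∀ i, ∑ j, w j i = 1 := colSum_normSq P hPc
  have hrow : ∀ j, ∑ i, w j i = 1 := rowSum_normSq P hPr
  have hs1 : ∑ j, s j = 1 := sum_eigenvalues_posDef hσ hσ1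
  set b : d → ℝ := fun i => ∑ j, s j ^ e * w j i with hb
  have hbnn : ∀ i, 0 ≤ b i := fun i =>
    Finset.sum_nonneg fun j _ => mul_nonneg (Real.rpow_nonneg (hsp j).le _) (hwnn j i)
  have hBdef : herPow hσ.1 e = Wm * Matrix.diagonal (fun j => ((s j ^ e : ℝ) : ℂ)) * star Wm :=
    rfl
  have htrace1 : (A * herPow hσ.1 e).trace = 1 := by
    have h1 : A * herPow hσ.1 e = herPow hσ.1 r * (ρ * (herPow hσ.1 r * herPow hσ.1 e)) := by
      rw [hAdef]; simp only [Matrix.mul_assoc]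
    rw [h1, Matrix.trace_mul_comm, herPow_add hσ r e, Matrix.mul_assoc,
      herPow_add hσ (r + e) r]
    have h0 : r + e + r = 0 := by rw [hr, he]; field_simp; ring
    rw [h0, herPow_zero, Matrix.mul_one, hρ1]
  have hAspec : A = Vm * Matrix.diagonal (fun i => ((a i : ℝ) : ℂ)) * star Vm :=
    hA.spectral_theorem
  have htrace2 : (A * herPow hσ.1 e).trace
      = ∑ i, ((a i : ℝ) : ℂ) * ((star Vm * herPow hσ.1 e * Vm) i i) := by
    conv_lhs => rw [hAspec]
    rw [show Vm * Matrix.diagonal (fun i => ((a i : ℝ) : ℂ)) * star Vm * herPow hσ.1 e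
        = Vm * (Matrix.diagonal (fun i => ((a i : ℝ) : ℂ)) * (star Vm * herPow hσ.1 e))
        from by simp only [Matrix.mul_assoc],
      Matrix.trace_mul_comm, Matrix.mul_assoc, trace_diagonal_mul]
  have hab : ∑ i, a i * b i = 1 := by
    rw [htrace2] at htrace1
    have hre := congrArg Complex.re htrace1
    rw [Complex.re_sum] at hre
    simp only [Complex.re_ofReal_mul, Complex.one_re] at hre
    rw [← hre]
    refine Finset.sum_congr rfl fun i _ => ?_
    congr 1
    rw [hBdef]
    exact (diagEntry Wm Vm (fun j => s j ^ e) i).symm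
  have hJ : ∀ i, b i ^ q ≤ ∑ j, s j * w j i := by
    intro i
    have h := Real.rpow_arith_mean_le_arith_mean_rpow Finset.univ (fun j => w j i)
      (fun j => s j ^ e) (fun j _ => hwnn j i) (hcol i)
      (fun j _ => Real.rpow_nonneg (hsp j).le _) hq1.le
    have hb' : b i = ∑ j, w j i * s j ^ e := by
      rw [hb]
      exact Finset.sum_congr rfl fun j _ => mul_comm _ _
    rw [hb']
    refine h.trans (le_of_eq (Finset.sum_congr rfl fun j _ => ?_))
    have heq : (s j ^ e) ^ q = s j := by
      rw [← Real.rpow_mul (hsp j).le]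
      have h1 : e * q = 1 := by rw [he, hq]; field_simp
      rw [h1, Real.rpow_one]
    rw [heq, mul_comm]
  have hsum_bq : ∑ i, b i ^ q ≤ 1 := by
    calc ∑ i, b i ^ q ≤ ∑ i, ∑ j, s j * w j i := Finset.sum_le_sum fun i _ => hJ i
      _ = ∑ j, ∑ i, s j * w j i := Finset.sum_comm
      _ = ∑ j, s j := by
          refine Finset.sum_congr rfl fun j _ => ?_
          rw [← Finset.mul_sum, hrow j, mul_one]
      _ = 1 := hs1
  have hconj : Real.HolderConjugate α q := Real.holderConjugate_iff.mpr ⟨hα1, by rw [hq]; field_simp; ring⟩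
  have hH := Real.inner_le_Lp_mul_Lq_of_nonneg Finset.univ hconj
    (fun i _ => hann i) (fun i _ => hbnn i)
  have hXnn : 0 ≤ ∑ i, a i ^ α := Finset.sum_nonneg fun i _ => Real.rpow_nonneg (hann i) _
  have h2 : (∑ i, b i ^ q) ^ (1/q) ≤ 1 :=
    Real.rpow_le_one (Finset.sum_nonneg fun i _ => Real.rpow_nonneg (hbnn i) _) hsum_bq
      (by positivity)
  have h3 : 1 ≤ (∑ i, a i ^ α) ^ (1/α) := by
    calc (1:ℝ) = ∑ i, a i * b i := hab.symm
      _ ≤ (∑ i, a i ^ α) ^ (1/α) * (∑ i, b i ^ q) ^ (1/q) := hH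
      _ ≤ (∑ i, a i ^ α) ^ (1/α) * 1 :=
          mul_le_mul_of_nonneg_left h2 (Real.rpow_nonneg hXnn _)
      _ = (∑ i, a i ^ α) ^ (1/α) := mul_one _
  have h5 := Real.rpow_le_rpow zero_le_one h3 hα0.le
  rw [Real.one_rpow, ← Real.rpow_mul hXnn, one_div, inv_mul_cancel₀ hαne,
    Real.rpow_one] at h5
  exact h5

theorem one_le_Psi (α : ℝ) (hα : α ∈ Set.Ioo (1 : ℝ) 2)
    (ρ σ : Matrix d d ℂ) (hρ : ρ.PosSemidef) (hσ : σ.PosDef)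
    (hρ1 : ρ.trace = 1) (hσ1 : σ.trace = 1) :
    1 ≤ Psi α ρ σ hρ.1 hσ.1 := by
  unfold Psi
  exact one_le_sum_pow α hα ρ σ hρ hσ hρ1 hσ1 _ rfl _

theorem sum_pow_le_one (α : ℝ) (hα1 : 1 ≤ α) (hα0 : (0:ℝ) < α)
    (σ : Matrix d d ℂ) (hσ : σ.PosDef) (hσ1 : σ.trace = 1)
    (r : ℝ) (hr : r = (1 - α) / (2 * α))
    (hA : (herPow hσ.1 r * σ * herPow hσ.1 r).IsHermitian) :
    ∑ i, hA.eigenvalues i ^ α ≤ 1 := by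
  have hαne : α ≠ 0 := hα0.ne'
  set A : Matrix d d ℂ := herPow hσ.1 r * σ * herPow hσ.1 r with hAdef
  set a : d → ℝ := hA.eigenvalues with ha
  set u : ℝ := r + 1 + r with hu
  have hAeq : A = herPow hσ.1 u := by
    have h' : A = herPow hσ.1 r * herPow hσ.1 1 * herPow hσ.1 r := by
      rw [herPow_one hσ.1]
    rw [herPow_add hσ r 1, herPow_add hσ (r + 1) r] at h'
    rw [hu]
    exact h'
  have huα : u * α = 1 := by
    rw [hu, hr]
    field_simp
    try ring
    try tauto
  set s : d → ℝ := hσ.1.eigenvalues with hs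
  have hsp : ∀ j, 0 < s j := fun j => hσ.eigenvalues_pos j
  set Wm : Matrix d d ℂ := (hσ.1.eigenvectorUnitary : Matrix d d ℂ) with hWm
  set Vm : Matrix d d ℂ := (hA.eigenvectorUnitary : Matrix d d ℂ) with hVm
  have hW1 : Wm * star Wm = 1 := (Matrix.mem_unitaryGroup_iff).mp hσ.1.eigenvectorUnitary.2
  have hW2 : star Wm * Wm = 1 := (Matrix.mem_unitaryGroup_iff').mp hσ.1.eigenvectorUnitary.2
  have hV1 : Vm * star Vm = 1 := (Matrix.mem_unitaryGroup_iff).mp hA.eigenvectorUnitary.2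
  have hV2 : star Vm * Vm = 1 := (Matrix.mem_unitaryGroup_iff').mp hA.eigenvectorUnitary.2
  set P : Matrix d d ℂ := star Wm * Vm with hP
  have hPc : star P * P = 1 := by
    rw [hP, Matrix.star_mul, star_star, Matrix.mul_assoc, ← Matrix.mul_assoc Wm (star Wm) Vm,
      hW1, Matrix.one_mul, hV2]
  have hPr : P * star P = 1 := by
    rw [hP, Matrix.star_mul, star_star, Matrix.mul_assoc, ← Matrix.mul_assoc Vm (star Vm) Wm,
      hV1, Matrix.one_mul, hW2]
  set w : d → d → ℝ := fun j i => Complex.normSq (P j i) with hw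
  have hwnn : ∀ j i, 0 ≤ w j i := fun j i => Complex.normSq_nonneg _
  have hcol : ∀ i, ∑ j, w j i = 1 := colSum_normSq P hPc
  have hrow : ∀ j, ∑ i, w j i = 1 := rowSum_normSq P hPr
  have hs1 : ∑ j, s j = 1 := sum_eigenvalues_posDef hσ hσ1
  have hBdef : herPow hσ.1 u = Wm * Matrix.diagonal (fun j => ((s j ^ u : ℝ) : ℂ)) * star Wm :=
    rfl
  have hdiag : star Vm * A * Vm = Matrix.diagonal (fun i => ((a i : ℝ) : ℂ)) := by
    have hAspec : A = Vm * Matrix.diagonal (fun i => ((a i : ℝ) : ℂ)) * star Vm :=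
      hA.spectral_theorem
    conv_lhs => rw [hAspec]
    rw [show star Vm * (Vm * Matrix.diagonal (fun i => ((a i : ℝ) : ℂ)) * star Vm) * Vm
        = star Vm * (Vm * (Matrix.diagonal (fun i => ((a i : ℝ) : ℂ)) * (star Vm * Vm)))
        from by simp only [Matrix.mul_assoc], hV2, Matrix.mul_one, ← Matrix.mul_assoc,
      hV2, Matrix.one_mul]
  have haeq : ∀ i, a i = ∑ j, s j ^ u * w j i := by
    intro i
    have h1 := diagEntry Wm Vm (fun j => s j ^ u) i
    rw [← hBdef, ← hAeq, hdiag] at h1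
    simpa using h1
  have hJ : ∀ i, a i ^ α ≤ ∑ j, s j * w j i := by
    intro i
    have h := Real.rpow_arith_mean_le_arith_mean_rpow Finset.univ (fun j => w j i)
      (fun j => s j ^ u) (fun j _ => hwnn j i) (hcol i)
      (fun j _ => Real.rpow_nonneg (hsp j).le _) hα1
    rw [haeq i, show (∑ j, s j ^ u * w j i) = ∑ j, w j i * s j ^ u from
      Finset.sum_congr rfl fun j _ => mul_comm _ _]
    refine h.trans (le_of_eq (Finset.sum_congr rfl fun j _ => ?_))
    rw [← Real.rpow_mul (hsp j).le, huα, Real.rpow_one, mul_comm]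
  calc ∑ i, a i ^ α ≤ ∑ i, ∑ j, s j * w j i := Finset.sum_le_sum fun i _ => hJ i
    _ = ∑ j, ∑ i, s j * w j i := Finset.sum_comm
    _ = ∑ j, s j := by
        refine Finset.sum_congr rfl fun j _ => ?_
        rw [← Finset.mul_sum, hrow j, mul_one]
    _ = 1 := hs1

theorem Psi_self_le_one (α : ℝ) (hα1 : 1 ≤ α) (hα0 : (0:ℝ) < α)
    (σ : Matrix d d ℂ) (hσ : σ.PosDef) (h1 h2 : σ.IsHermitian) (hσ1 : σ.trace = 1) :
    Psi α σ σ h1 h2 ≤ 1 := by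
  unfold Psi
  exact sum_pow_le_one α hα1 hα0 σ hσ hσ1 _ rfl _

/-- For `α ∈ (1,2)`, density matrices `ρ`, `σ` with `σ` positive definite,
`D_α(ρ‖σ) ≥ 0`, with equality if `ρ = σ`. -/
theorem renyiDiv_nonneg (α : ℝ) (hα : α ∈ Set.Ioo (1 : ℝ) 2)
    (ρ σ : Matrix d d ℂ) (hρ : ρ.PosSemidef) (hσ : σ.PosDef)
    (hρ1 : ρ.trace = 1) (hσ1 : σ.trace = 1) :
    0 ≤ renyiDiv α ρ σ hρ.1 hσ.1 ∧ (ρ = σ → renyiDiv α ρ σ hρ.1 hσ.1 = 0) := by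
  have hα1 : 1 < α := hα.1
  have hα0 : (0:ℝ) < α := zero_lt_one.trans hα1
  constructor
  · unfold renyiDiv
    rw [hρ1, Complex.one_re, div_one]
    exact mul_nonneg (inv_nonneg.mpr (by linarith))
      (Real.logb_nonneg (by norm_num) (one_le_Psi α hα ρ σ hρ hσ hρ1 hσ1))
  · intro h
    subst h
    have hone : Psi α ρ ρ hρ.1 hσ.1 = 1 :=
      le_antisymm (Psi_self_le_one α hα1.le hα0 ρ hσ hρ.1 hσ.1 hσ1)
        (one_le_Psi α hα ρ ρ hρ hσ hρ1 hσ1)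
    unfold renyiDiv
    rw [hone, hρ1, Complex.one_re, div_one, Real.logb_one, mul_zero]
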